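/- Let G be a group with a semilinear left preorder ≼ with positive cone P and let H = P ∩ P⁻¹. If g₁, ..., gₙ ∈ P and the product w = g₁·g₂·⋯·gₙ lies in H, then every gᵢ lies in H. -/

import Mathlib

theorem stmt_7 {G : Type*} [Group G] (r : G → G → Prop)
    (hrefl : ∀ x, r x x)
    (htrans : ∀ x y z, r x y → r y z → r x z)
    (hlinv : ∀ g x y, r x y → r (g * x) (g * y))
    (hO6 : ∀ x y z, r y x → r z x → (r y z ∨ r z y))
    (hO7 : ∀ x y, ∃ z, r z x ∧ r z y)
    (l : List G) (hl : ∀ g ∈ l, r 1 g)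
    (hw : r 1 l.prod ∧ r 1 l.prod⁻¹) :
    ∀ g ∈ l, r 1 g ∧ r 1 g⁻¹ := by
  have pospr : ∀ l : List G, (∀ g ∈ l, r 1 g) → r 1 l.prod := by
    intro l
    induction l with
    | nil => intro _; simpa using hrefl 1
    | cons a t ih =>
      intro h
      have h1 : r 1 a := h a (List.mem_cons_self (a := a) (l := t))
      have h2 : r 1 t.prod := ih (fun g hg => h g (List.mem_cons_of_mem a hg))
      have h3 : r a (a * t.prod) := by simpa using hlinv a 1 t.prod h2
      simpa using htrans 1 a (a * t.prod) h1 h3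
  have key : ∀ l : List G, (∀ g ∈ l, r 1 g) → r 1 l.prod → r l.prod 1 →
      ∀ g ∈ l, r 1 g ∧ r 1 g⁻¹ := by
    intro l
    induction l with
    | nil => intro _ _ _ g hg; cases hg
    | cons a t ih =>
      intro hpos _ hle g hg
      have ha1 : r 1 a := hpos a (List.mem_cons_self (a := a) (l := t))
      have ht : ∀ g ∈ t, r 1 g := fun g hg => hpos g (List.mem_cons_of_mem a hg)
      have htp : r 1 t.prod := pospr t ht
      have hap : r a (a * t.prod) := by simpa using hlinv a 1 t.prod htp
      have ha_le : r a 1 := htrans a (a * t.prod) 1 (by simpa using hap) (by simpa using hle)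
      have hainv : r 1 a⁻¹ := by simpa using hlinv a⁻¹ a 1 ha_le
      have hainv' : r a⁻¹ 1 := by simpa using hlinv a⁻¹ 1 a ha1
      have htple : r t.prod 1 := by
        have h := hlinv a⁻¹ (a * t.prod) 1 (by simpa using hle)
        simp only [mul_one] at h
        rw [inv_mul_cancel_left] at h
        exact htrans t.prod a⁻¹ 1 h hainv'
      rcases List.mem_cons.mp hg with h | h
      · subst h; exact ⟨ha1, hainv⟩
      · exact ih ht htp htple g h
  have hle : r l.prod 1 := by simpa using hlinv l.prod 1 l.prod⁻¹ hw.2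
  exact key l hl hw.1 hle
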